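/- If n ≡ 3 (mod 6), then λ₁ = n/3 and λ₂ = (n−1)/2 are realizable as the indices of a configuration (3,3) GDD(n,2,6;λ₁,λ₂), assuming the existence of a resolvable TS(n,1) (Kirkman triple system) with (n−1)/2 parallel classes of n/3 blocks each. -/

import Mathlib

/-- A group divisible design with two groups of size `n` (the points are
`Fin 2 × Fin n`, the first coordinate indicating the group), blocks of size `k`,
each point lying in `rep` blocks, every pair of distinct points in the same
group lying in exactly `l1` blocks, and every pair of points in different
groups lying in exactly `l2` blocks. -/
structure GDD (n k l1 l2 : ℕ) where
  blocks : Multiset (Finset (Fin 2 × Fin n))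
  blockCard : ∀ B ∈ blocks, B.card = k
  rep : ℕ
  pointRep : ∀ x : Fin 2 × Fin n,
    (blocks.filter fun B => x ∈ B).card = rep
  samePairs : ∀ x y : Fin 2 × Fin n, x ≠ y → x.1 = y.1 →
    (blocks.filter fun B => x ∈ B ∧ y ∈ B).card = l1
  crossPairs : ∀ x y : Fin 2 × Fin n, x.1 ≠ y.1 →
    (blocks.filter fun B => x ∈ B ∧ y ∈ B).card = l2

/-- The design has fixed block configuration `(s,t)`: every block meets one
group in exactly `s` points and the other group in exactly `t` points. -/
def GDD.HasConfig {n k l1 l2 : ℕ} (D : GDD n k l1 l2) (s t : ℕ) : Prop :=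
  ∀ B ∈ D.blocks,
    ((B.filter fun p => p.1 = 0).card = s ∧ (B.filter fun p => p.1 = 1).card = t) ∨
    ((B.filter fun p => p.1 = 0).card = t ∧ (B.filter fun p => p.1 = 1).card = s)

/-- A balanced incomplete block design `BIBD(n,k,lam)`: a collection of
`k`-element subsets (blocks) of an `n`-set such that every pair of distinct
points lies in exactly `lam` blocks. -/
structure BIBD (n k lam : ℕ) where
  blocks : Multiset (Finset (Fin n))
  blockCard : ∀ B ∈ blocks, B.card = k
  pairs : ∀ x y : Fin n, x ≠ y →
    (blocks.filter fun B => x ∈ B ∧ y ∈ B).card = lam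

open Multiset

private def emb (i : Fin 2) (n : ℕ) : Fin n ↪ Fin 2 × Fin n :=
  ⟨fun a => (i, a), fun _ _ h => (Prod.ext_iff.mp h).2⟩

private def mk2 (n : ℕ) (B₁ B₂ : Finset (Fin n)) : Finset (Fin 2 × Fin n) :=
  B₁.map (emb 0 n) ∪ B₂.map (emb 1 n)

private lemma mem_map_emb {n : ℕ} {i : Fin 2} {B : Finset (Fin n)} (x : Fin 2 × Fin n) :
    x ∈ B.map (emb i n) ↔ x.1 = i ∧ x.2 ∈ B := by
  obtain ⟨j, a⟩ := x
  simp only [Finset.mem_map, show ∀ b, emb i n b = (i, b) from fun _ => rfl, Prod.mk.injEq]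
  aesop

private lemma mem_mk2 {n : ℕ} {B₁ B₂ : Finset (Fin n)} (x : Fin 2 × Fin n) :
    x ∈ mk2 n B₁ B₂ ↔ (x.1 = 0 ∧ x.2 ∈ B₁) ∨ (x.1 = 1 ∧ x.2 ∈ B₂) := by
  rw [mk2, Finset.mem_union, mem_map_emb, mem_map_emb]

private lemma countP_bind' {α β : Type*} (s : Multiset α) (f : α → Multiset β)
    (p : β → Prop) [DecidablePred p] :
    countP p (s.bind f) = (s.map fun a => countP p (f a)).sum := by
  induction s using Multiset.induction_on with
  | empty => simp
  | cons a s ih => simp [Multiset.cons_bind, Multiset.countP_add, ih]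

private lemma countP_finset_sum {ι α : Type*} (s : Finset ι) (f : ι → Multiset α)
    (p : α → Prop) [DecidablePred p] :
    Multiset.countP p (∑ j ∈ s, f j) = ∑ j ∈ s, Multiset.countP p (f j) :=
  map_sum (Multiset.countPAddMonoidHom p) f s

private lemma sum_map_ite {α : Type*} (s : Multiset α) (p : α → Prop) [DecidablePred p] (c : ℕ) :
    (s.map fun a => if p a then c else 0).sum = c * Multiset.countP p s := by
  induction s using Multiset.induction_on with
  | empty => simp
  | cons a s ih =>
    simp only [Multiset.map_cons, Multiset.sum_cons, ih, Multiset.countP_cons, mul_add]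
    split_ifs <;> ring

private lemma card_filter_const {α : Type*} (s : Multiset α) (q : Prop) [Decidable q] :
    ((s.filter fun _ => q).card) = if q then s.card else 0 := by
  split_ifs with h
  · rw [Multiset.filter_eq_self.2 fun a _ => h]
  · rw [Multiset.card_eq_zero, Multiset.filter_eq_nil]
    exact fun a _ => h


theorem stmt_12 (n : ℕ) (hn : n % 6 = 3) (D : BIBD n 3 1)
    (classes : Fin ((n - 1) / 2) → Multiset (Finset (Fin n)))
    (hpart : ∑ j, classes j = D.blocks)
    (ht : ∀ j, (classes j).card = n / 3)
    (ha : ∀ j, ∀ x : Fin n, ((classes j).filter fun B => x ∈ B).card = 1) :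
    ∃ G : GDD n 6 (n / 3) ((n - 1) / 2), G.HasConfig 3 3 := by
  classical
  have hsub : ∀ j, ∀ B ∈ classes j, B ∈ D.blocks := by
    intro j B hB
    rw [← hpart]
    exact Multiset.mem_of_le
      (Finset.single_le_sum (f := classes) (fun i _ => Multiset.zero_le _) (Finset.mem_univ j)) hB
  set Bl : Multiset (Finset (Fin 2 × Fin n)) :=
    ∑ j, (classes j).bind fun B₁ => (classes j).map fun B₂ => mk2 n B₁ B₂ with hBl
  have hcount : ∀ (p : Finset (Fin 2 × Fin n) → Prop) [DecidablePred p],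
      (Bl.filter p).card =
        ∑ j, ((classes j).map fun B₁ =>
          ((classes j).filter fun B₂ => p (mk2 n B₁ B₂)).card).sum := by
    intro p _
    rw [← Multiset.countP_eq_card_filter, hBl, countP_finset_sum]
    refine Finset.sum_congr rfl fun j _ => ?_
    rw [countP_bind']
    congr 1
    refine Multiset.map_congr rfl fun B₁ _ => ?_
    rw [Multiset.countP_map]
  have hmemBl : ∀ B ∈ Bl, ∃ j, ∃ B₁ ∈ classes j, ∃ B₂ ∈ classes j, B = mk2 n B₁ B₂ := by
    intro B hB
    rw [hBl, Multiset.mem_sum] at hB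
    obtain ⟨j, -, hB⟩ := hB
    rw [Multiset.mem_bind] at hB
    obtain ⟨B₁, h1, hB⟩ := hB
    rw [Multiset.mem_map] at hB
    obtain ⟨B₂, h2, rfl⟩ := hB
    exact ⟨j, B₁, h1, B₂, h2, rfl⟩
  have hdisj : ∀ B₁ B₂ : Finset (Fin n), Disjoint (B₁.map (emb 0 n)) (B₂.map (emb 1 n)) := by
    intro B₁ B₂
    rw [Finset.disjoint_left]
    intro x h1 h2
    rw [mem_map_emb] at h1 h2
    rw [h1.1] at h2
    exact absurd h2.1 (by decide)
  have hcard : ∀ j, ∀ B₁ ∈ classes j, ∀ B₂ ∈ classes j, (mk2 n B₁ B₂).card = 6 := by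
    intro j B₁ h1 B₂ h2
    rw [mk2, Finset.card_union_of_disjoint (hdisj _ _), Finset.card_map, Finset.card_map,
      D.blockCard _ (hsub j _ h1), D.blockCard _ (hsub j _ h2)]
  have hf0 : ∀ B₁ B₂ : Finset (Fin n),
      ((mk2 n B₁ B₂).filter fun p => p.1 = 0) = B₁.map (emb 0 n) := by
    intro B₁ B₂
    ext x
    simp only [Finset.mem_filter, mem_mk2, mem_map_emb]
    constructor
    · rintro ⟨h | h, hx⟩
      · exact ⟨hx, h.2⟩
      · rw [h.1] at hx; exact absurd hx (by decide)
    · rintro ⟨hx, h⟩; exact ⟨Or.inl ⟨hx, h⟩, hx⟩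
  have hf1 : ∀ B₁ B₂ : Finset (Fin n),
      ((mk2 n B₁ B₂).filter fun p => p.1 = 1) = B₂.map (emb 1 n) := by
    intro B₁ B₂
    ext x
    simp only [Finset.mem_filter, mem_mk2, mem_map_emb]
    constructor
    · rintro ⟨h | h, hx⟩
      · rw [h.1] at hx; exact absurd hx (by decide)
      · exact ⟨hx, h.2⟩
    · rintro ⟨hx, h⟩; exact ⟨Or.inr ⟨hx, h⟩, hx⟩
  refine ⟨⟨Bl, ?_, ((n - 1) / 2) * (n / 3), ?_, ?_, ?_⟩, ?_⟩
  · -- blockCard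
    intro B hB
    obtain ⟨j, B₁, h1, B₂, h2, rfl⟩ := hmemBl B hB
    exact hcard j B₁ h1 B₂ h2
  · -- pointRep
    rintro ⟨i, a⟩
    rw [hcount]
    fin_cases i
    · simp only [Fin.zero_eta, Fin.mk_one]
      have key : ∀ j, ((classes j).map fun B₁ =>
          ((classes j).filter fun B₂ => ((0 : Fin 2), a) ∈ mk2 n B₁ B₂).card).sum = n / 3 := by
        intro j
        have h1 : ∀ B₁ : Finset (Fin n),
            ((classes j).filter fun B₂ => ((0 : Fin 2), a) ∈ mk2 n B₁ B₂).card
              = if a ∈ B₁ then n / 3 else 0 := by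
          intro B₁
          rw [Multiset.filter_congr (q := fun _ => a ∈ B₁) (fun B₂ _ => by simp [mem_mk2]),
            card_filter_const, ht j]
        simp only [h1]
        rw [sum_map_ite]
        have h2 := ha j a
        rw [← Multiset.countP_eq_card_filter] at h2
        rw [h2, mul_one]
      simp only [key]
      rw [Finset.sum_const, Finset.card_univ, Fintype.card_fin, smul_eq_mul]
    · simp only [Fin.zero_eta, Fin.mk_one]
      have key : ∀ j, ((classes j).map fun B₁ =>
          ((classes j).filter fun B₂ => ((1 : Fin 2), a) ∈ mk2 n B₁ B₂).card).sum = n / 3 := by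
        intro j
        have h1 : ∀ B₁ : Finset (Fin n),
            ((classes j).filter fun B₂ => ((1 : Fin 2), a) ∈ mk2 n B₁ B₂).card = 1 := by
          intro B₁
          rw [Multiset.filter_congr (q := fun B₂ => a ∈ B₂) (fun B₂ _ => by simp [mem_mk2])]
          exact ha j a
        simp only [h1, Multiset.map_const', Multiset.sum_replicate, smul_eq_mul, mul_one, ht j]
      simp only [key]
      rw [Finset.sum_const, Finset.card_univ, Fintype.card_fin, smul_eq_mul]
  · -- samePairs
    rintro ⟨i, a⟩ ⟨i', b⟩ hne h
    simp only at h
    subst h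
    have hab : a ≠ b := fun h => hne (by rw [h])
    have key : Multiset.countP (fun B => a ∈ B ∧ b ∈ B) D.blocks = 1 := by
      rw [Multiset.countP_eq_card_filter]; exact D.pairs a b hab
    rw [← hpart, countP_finset_sum] at key
    rw [hcount]
    fin_cases i
    · simp only [Fin.zero_eta, Fin.mk_one]
      have step : ∀ j, ((classes j).map fun B₁ => ((classes j).filter fun B₂ =>
          ((0 : Fin 2), a) ∈ mk2 n B₁ B₂ ∧ ((0 : Fin 2), b) ∈ mk2 n B₁ B₂).card).sum
            = n / 3 * Multiset.countP (fun B => a ∈ B ∧ b ∈ B) (classes j) := by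
        intro j
        have h1 : ∀ B₁ : Finset (Fin n),
            ((classes j).filter fun B₂ =>
              ((0 : Fin 2), a) ∈ mk2 n B₁ B₂ ∧ ((0 : Fin 2), b) ∈ mk2 n B₁ B₂).card
              = if a ∈ B₁ ∧ b ∈ B₁ then n / 3 else 0 := by
          intro B₁
          rw [Multiset.filter_congr (q := fun _ => a ∈ B₁ ∧ b ∈ B₁)
            (fun B₂ _ => by simp [mem_mk2]), card_filter_const, ht j]
        simp only [h1]
        rw [sum_map_ite]
      simp only [step]
      rw [← Finset.mul_sum, key, mul_one]
    · simp only [Fin.zero_eta, Fin.mk_one]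
      have step : ∀ j, ((classes j).map fun B₁ => ((classes j).filter fun B₂ =>
          ((1 : Fin 2), a) ∈ mk2 n B₁ B₂ ∧ ((1 : Fin 2), b) ∈ mk2 n B₁ B₂).card).sum
            = n / 3 * Multiset.countP (fun B => a ∈ B ∧ b ∈ B) (classes j) := by
        intro j
        have h1 : ∀ B₁ : Finset (Fin n),
            ((classes j).filter fun B₂ =>
              ((1 : Fin 2), a) ∈ mk2 n B₁ B₂ ∧ ((1 : Fin 2), b) ∈ mk2 n B₁ B₂).card
              = Multiset.countP (fun B => a ∈ B ∧ b ∈ B) (classes j) := by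
          intro B₁
          rw [Multiset.filter_congr (q := fun B₂ => a ∈ B₂ ∧ b ∈ B₂)
            (fun B₂ _ => by simp [mem_mk2]), ← Multiset.countP_eq_card_filter]
        simp only [h1, Multiset.map_const', Multiset.sum_replicate, smul_eq_mul, ht j]
      simp only [step]
      rw [← Finset.mul_sum, key, mul_one]
  · -- crossPairs
    rintro ⟨i, a⟩ ⟨i', b⟩ hne
    simp only at hne
    rw [hcount]
    have main : ∀ (c d : Fin n), ∀ j, ((classes j).map fun B₁ => ((classes j).filter fun B₂ =>
        c ∈ B₁ ∧ d ∈ B₂).card).sum = 1 := by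
      intro c d j
      have h1 : ∀ B₁ : Finset (Fin n),
          ((classes j).filter fun B₂ => c ∈ B₁ ∧ d ∈ B₂).card = if c ∈ B₁ then 1 else 0 := by
        intro B₁
        split_ifs with h
        · rw [Multiset.filter_congr (q := fun B₂ => d ∈ B₂) (fun B₂ _ => by simp [h])]
          exact ha j d
        · rw [Multiset.filter_congr (q := fun _ => False) (fun B₂ _ => by simp [h])]
          rw [Multiset.card_eq_zero, Multiset.filter_eq_nil]
          exact fun a _ => not_false
      simp only [h1]
      rw [sum_map_ite]
      have h2 := ha j c
      rw [← Multiset.countP_eq_card_filter] at h2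
      rw [h2, mul_one]
    fin_cases i <;> fin_cases i'
    · exact absurd rfl hne
    · simp only [Fin.zero_eta, Fin.mk_one]
      have step : ∀ (j) (B₁ : Finset (Fin n)), ((classes j).filter fun B₂ =>
          ((0 : Fin 2), a) ∈ mk2 n B₁ B₂ ∧ ((1 : Fin 2), b) ∈ mk2 n B₁ B₂)
            = (classes j).filter fun B₂ => a ∈ B₁ ∧ b ∈ B₂ :=
        fun j B₁ => Multiset.filter_congr (fun B₂ _ => by simp [mem_mk2])
      simp only [step, main a b]
      simp
    · simp only [Fin.zero_eta, Fin.mk_one]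
      have step : ∀ (j) (B₁ : Finset (Fin n)), ((classes j).filter fun B₂ =>
          ((1 : Fin 2), a) ∈ mk2 n B₁ B₂ ∧ ((0 : Fin 2), b) ∈ mk2 n B₁ B₂)
            = (classes j).filter fun B₂ => b ∈ B₁ ∧ a ∈ B₂ :=
        fun j B₁ => Multiset.filter_congr (fun B₂ _ => by simp [mem_mk2, and_comm])
      simp only [step, main b a]
      simp
    · exact absurd rfl hne
  · -- config
    intro B hB
    obtain ⟨j, B₁, h1, B₂, h2, rfl⟩ := hmemBl B hB
    left
    rw [hf0, hf1, Finset.card_map, Finset.card_map]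
    exact ⟨D.blockCard _ (hsub j _ h1), D.blockCard _ (hsub j _ h2)⟩
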